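/- Let d ≥ 2 and let λ₁, …, λ_{d²−1} be d×d complex matrices that are Hermitian, traceless, and satisfy Tr(λ_i·λ_j) = d·δ_{ij} for all i,j. Then for every U in the special unitary group SU(d) there exists Q in the special orthogonal group SO(d²−1) such that for every Hermitian d×d matrix ρ, Tr(UρU†·λ_i) = Σ_j Q_{ij} Tr(ρ·λ_j) for all i. -/

import Mathlib

open Matrix Complex BigOperators

/-- Membership in SU(d): unitary d×d complex matrix of determinant 1. -/
def IsSU (d : ℕ) (U : Matrix (Fin d) (Fin d) ℂ) : Prop := Uᴴ * U = 1 ∧ U.det = 1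

/-- Membership in SO(n): orthogonal n×n real matrix of determinant 1. -/
def IsSO (n : ℕ) (Q : Matrix (Fin n) (Fin n) ℝ) : Prop := Qᵀ * Q = 1 ∧ Q.det = 1



open Matrix Complex BigOperators

section Aux

variable {d : ℕ}

/-- The extended family: the `lam` plus the identity. -/
def muFam (lam : Fin (d ^ 2 - 1) → Matrix (Fin d) (Fin d) ℂ) :
    Fin (d ^ 2 - 1) ⊕ Unit → Matrix (Fin d) (Fin d) ℂ :=
  Sum.elim lam fun _ => 1

variable (lam : Fin (d ^ 2 - 1) → Matrix (Fin d) (Fin d) ℂ)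
  (htrless : ∀ i, (lam i).trace = 0)
  (horth : ∀ i j, ((lam i) * (lam j)).trace = if i = j then (d : ℂ) else 0)

include htrless horth in
lemma trace_muFam_mul (a : Fin (d ^ 2 - 1) ⊕ Unit) (k : Fin (d ^ 2 - 1)) :
    ((muFam lam a) * lam k).trace = if a = Sum.inl k then (d : ℂ) else 0 := by
  cases a with
  | inl j => simpa [muFam] using horth j k
  | inr u => simp [muFam, htrless k]

include htrless in
lemma trace_muFam (a : Fin (d ^ 2 - 1) ⊕ Unit) :
    (muFam lam a).trace = if a = Sum.inr () then (d : ℂ) else 0 := by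
  cases a with
  | inl j => simp [muFam, htrless j]
  | inr u => simp [muFam, Matrix.trace_one]

include htrless horth in
lemma muFam_li (hd : 2 ≤ d) : LinearIndependent ℂ (muFam lam) := by
  have hdne : (d : ℂ) ≠ 0 := Nat.cast_ne_zero.mpr (by omega)
  rw [Fintype.linearIndependent_iff]
  intro g hg
  have key : ∀ M : Matrix (Fin d) (Fin d) ℂ,
      ((∑ b, g b • muFam lam b) * M).trace = ∑ b, g b * ((muFam lam b) * M).trace := by
    intro M
    rw [Finset.sum_mul]
    simp [Matrix.trace_sum, Matrix.smul_mul, Matrix.trace_smul, smul_eq_mul]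
  have key2 : (∑ b, g b • muFam lam b).trace = ∑ b, g b * (muFam lam b).trace := by
    simp [Matrix.trace_sum, Matrix.trace_smul, smul_eq_mul]
  intro a
  cases a with
  | inl k =>
      have h1 := key (lam k)
      rw [hg] at h1
      simp only [Matrix.zero_mul, Matrix.trace_zero] at h1
      rw [Finset.sum_congr rfl
        (fun b _ => by rw [trace_muFam_mul lam htrless horth b k])] at h1
      simp only [mul_ite, mul_zero, Finset.sum_ite_eq'] at h1
      simp only [Finset.mem_univ, if_true] at h1
      exact (mul_eq_zero.mp h1.symm).resolve_right hdne
  | inr u =>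
      have h1 := key2
      rw [hg] at h1
      simp only [Matrix.trace_zero] at h1
      rw [Finset.sum_congr rfl
        (fun b _ => by rw [trace_muFam lam htrless b])] at h1
      simp only [mul_ite, mul_zero, Finset.sum_ite_eq'] at h1
      simp only [Finset.mem_univ, if_true] at h1
      cases u
      exact (mul_eq_zero.mp h1.symm).resolve_right hdne

lemma card_muFam (hd : 2 ≤ d) :
    Fintype.card (Fin (d ^ 2 - 1) ⊕ Unit) = Module.finrank ℂ (Matrix (Fin d) (Fin d) ℂ) := by
  rw [Module.finrank_matrix]
  simp only [Fintype.card_sum, Fintype.card_fin, Fintype.card_unit, Module.finrank_self]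
  have h1 : d ^ 2 = d * d := sq d
  have h2 : 1 ≤ d * d := Nat.one_le_iff_ne_zero.mpr (by positivity)
  omega

/-- The basis consisting of the `lam` plus the identity. -/
noncomputable def muBasis (htrless : ∀ i, (lam i).trace = 0)
    (horth : ∀ i j, ((lam i) * (lam j)).trace = if i = j then (d : ℂ) else 0)
    (hd : 2 ≤ d) :
    Module.Basis (Fin (d ^ 2 - 1) ⊕ Unit) ℂ (Matrix (Fin d) (Fin d) ℂ) :=
  basisOfLinearIndependentOfCardEqFinrank (muFam_li lam htrless horth hd) (card_muFam hd)

lemma muBasis_apply (hd : 2 ≤ d) (a) : muBasis lam htrless horth hd a = muFam lam a := by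
  simp [muBasis]

end Aux

section Aux2

variable {d : ℕ} (lam : Fin (d ^ 2 - 1) → Matrix (Fin d) (Fin d) ℂ)
  (htrless : ∀ i, (lam i).trace = 0)
  (horth : ∀ i j, ((lam i) * (lam j)).trace = if i = j then (d : ℂ) else 0)
  (hd : 2 ≤ d)

include htrless horth hd in
lemma sum_trace_smul (M : Matrix (Fin d) (Fin d) ℂ) (N : Matrix (Fin d) (Fin d) ℂ) :
    ((∑ a, (muBasis lam htrless horth hd).repr M a • muFam lam a) * N).trace
      = ∑ a, (muBasis lam htrless horth hd).repr M a * ((muFam lam a) * N).trace := by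
  rw [Finset.sum_mul]
  simp [Matrix.smul_mul, smul_eq_mul]

include htrless horth hd in
lemma muBasis_repr_inl (M : Matrix (Fin d) (Fin d) ℂ) (k : Fin (d ^ 2 - 1)) :
    (muBasis lam htrless horth hd).repr M (Sum.inl k) = (M * lam k).trace / d := by
  have hdne : (d : ℂ) ≠ 0 := Nat.cast_ne_zero.mpr (by omega)
  set b := muBasis lam htrless horth hd with hb
  have h : ∑ a, b.repr M a • b a = M := b.sum_repr M
  have h2 : ∑ a, b.repr M a • muFam lam a = M := by
    conv_rhs => rw [← h]
    exact Finset.sum_congr rfl fun a _ => by rw [muBasis_apply lam htrless horth hd a]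
  have h3 : (M * lam k).trace = b.repr M (Sum.inl k) * d := by
    conv_lhs => rw [← h2]
    rw [sum_trace_smul lam htrless horth hd M (lam k)]
    rw [Finset.sum_congr rfl (fun a _ => by rw [trace_muFam_mul lam htrless horth a k])]
    simp [mul_ite, Finset.sum_ite_eq']
    exact Or.inl rfl
  rw [h3]; field_simp

include htrless horth hd in
lemma muBasis_repr_inr (M : Matrix (Fin d) (Fin d) ℂ) :
    (muBasis lam htrless horth hd).repr M (Sum.inr ()) = M.trace / d := by
  have hdne : (d : ℂ) ≠ 0 := Nat.cast_ne_zero.mpr (by omega)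
  set b := muBasis lam htrless horth hd with hb
  have h : ∑ a, b.repr M a • b a = M := b.sum_repr M
  have h2 : ∑ a, b.repr M a • muFam lam a = M := by
    conv_rhs => rw [← h]
    exact Finset.sum_congr rfl fun a _ => by rw [muBasis_apply lam htrless horth hd a]
  have h3 : M.trace = b.repr M (Sum.inr ()) * d := by
    conv_lhs => rw [← h2]
    rw [Matrix.trace_sum]
    simp only [Matrix.trace_smul, smul_eq_mul]
    rw [Finset.sum_congr rfl (fun a _ => by rw [trace_muFam lam htrless a])]
    simp [mul_ite, Finset.sum_ite_eq']
  rw [h3]; field_simp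

end Aux2

section Aux3
variable {d : ℕ} (lam : Fin (d ^ 2 - 1) → Matrix (Fin d) (Fin d) ℂ)
  (htrless : ∀ i, (lam i).trace = 0)
  (horth : ∀ i j, ((lam i) * (lam j)).trace = if i = j then (d : ℂ) else 0)
  (hd : 2 ≤ d)

include htrless horth hd in
lemma muBasis_repr_inr' (M : Matrix (Fin d) (Fin d) ℂ) (u : Unit) :
    (muBasis lam htrless horth hd).repr M (Sum.inr u) = M.trace / d := by
  cases u; exact muBasis_repr_inr lam htrless horth hd M
end Aux3

open Kronecker

section Det

variable {d : ℕ}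

lemma det_conj_map (U : Matrix (Fin d) (Fin d) ℂ) (hdet : U.det = 1) :
    LinearMap.det ((LinearMap.mulRight ℂ U).comp (LinearMap.mulLeft ℂ Uᴴ)
      : Matrix (Fin d) (Fin d) ℂ →ₗ[ℂ] Matrix (Fin d) (Fin d) ℂ) = 1 := by
  set sb := Matrix.stdBasis ℂ (Fin d) (Fin d) with hsb
  have hmat : ((LinearMap.mulRight ℂ U).comp (LinearMap.mulLeft ℂ Uᴴ)
      : Matrix (Fin d) (Fin d) ℂ →ₗ[ℂ] Matrix (Fin d) (Fin d) ℂ)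
      = Matrix.toLin sb sb (Uᴴ ⊗ₖ Uᵀ) := by
    apply sb.ext
    rintro ⟨p, q⟩
    rw [Matrix.toLin_self, Fintype.sum_prod_type]
    simp only [hsb, Matrix.stdBasis_eq_single]
    ext i j
    simp only [LinearMap.comp_apply, LinearMap.mulLeft_apply, LinearMap.mulRight_apply,
      Matrix.sum_apply, Matrix.smul_apply, Matrix.kroneckerMap_apply, smul_eq_mul,
      Matrix.single, Matrix.of_apply, Matrix.mul_apply, Matrix.transpose_apply]
    simp [Finset.mul_sum, Finset.sum_mul, ite_and, Finset.sum_ite_eq, Finset.sum_ite_eq',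
      mul_comm, mul_left_comm]
  rw [hmat, LinearMap.det_toLin, Matrix.det_kronecker, Matrix.det_conjTranspose,
    Matrix.det_transpose, hdet]
  simp

end Det

/-- Given a Gell-Mann type basis `lam` of the traceless Hermitian d×d
matrices (Hermitian, traceless, `Tr(λ_i λ_j) = d δ_{ij}`), for every U ∈ SU(d) there
exists Q ∈ SO(d²−1) such that for every Hermitian ρ,
`Tr(UρU† λ_i) = Σ_j Q_{ij} Tr(ρ λ_j)`. -/
theorem sud_induces_so_on_bloch (d : ℕ) (hd : 2 ≤ d)
    (lam : Fin (d ^ 2 - 1) → Matrix (Fin d) (Fin d) ℂ)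
    (hherm : ∀ i, (lam i).IsHermitian)
    (htrless : ∀ i, (lam i).trace = 0)
    (horth : ∀ i j, ((lam i) * (lam j)).trace = if i = j then (d : ℂ) else 0)
    (U : Matrix (Fin d) (Fin d) ℂ) (hU : IsSU d U) :
    ∃ Q : Matrix (Fin (d ^ 2 - 1)) (Fin (d ^ 2 - 1)) ℝ, IsSO (d ^ 2 - 1) Q ∧
      ∀ ρ : Matrix (Fin d) (Fin d) ℂ, ρ.IsHermitian →
        ∀ i, ((U * ρ * Uᴴ * lam i).trace).re =
          ∑ j, Q i j * ((ρ * lam j).trace).re := by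
  obtain ⟨hUu, hUdet⟩ := hU
  have hUU : U * Uᴴ = 1 := mul_eq_one_comm.mp hUu
  have hdne : (d : ℂ) ≠ 0 := Nat.cast_ne_zero.mpr (by omega)
  set B : Fin (d ^ 2 - 1) → Matrix (Fin d) (Fin d) ℂ := fun i => Uᴴ * lam i * U with hB
  -- basic facts about B
  have hBherm : ∀ i, (B i).IsHermitian := fun i =>
    Matrix.isHermitian_conjTranspose_mul_mul U (hherm i)
  have hBtr : ∀ i, (B i).trace = 0 := by
    intro i
    rw [hB]
    simp only
    rw [Matrix.trace_mul_cycle, hUU, Matrix.one_mul, htrless i]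
  have hBmul : ∀ i m, (B i * B m).trace = if i = m then (d : ℂ) else 0 := by
    intro i m
    have hUUX : ∀ X : Matrix (Fin d) (Fin d) ℂ, U * (Uᴴ * X) = X := fun X => by
      rw [← Matrix.mul_assoc, hUU, Matrix.one_mul]
    have h1 : B i * B m = Uᴴ * (lam i * lam m) * U := by
      rw [hB]; simp only [Matrix.mul_assoc, hUUX]
    rw [h1, Matrix.trace_mul_cycle, ← Matrix.mul_assoc, hUU, Matrix.one_mul, horth i m]
  -- realness of traces of products of Hermitian matrices
  have trre : ∀ A C : Matrix (Fin d) (Fin d) ℂ, A.IsHermitian → C.IsHermitian →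
      (A * C).trace = (((A * C).trace).re : ℂ) := by
    intro A C hA hC
    have h1 : ((A * C)ᴴ).trace = (A * C).trace := by
      rw [Matrix.conjTranspose_mul, hA.eq, hC.eq, Matrix.trace_mul_comm]
    rw [Matrix.trace_conjTranspose] at h1
    exact (Complex.conj_eq_iff_re.mp h1).symm
  -- the candidate matrix
  set Q : Matrix (Fin (d ^ 2 - 1)) (Fin (d ^ 2 - 1)) ℝ :=
    Matrix.of fun i j => ((B i * lam j).trace).re / d with hQ
  have hQC : ∀ i j, ((Q i j : ℝ) : ℂ) = (B i * lam j).trace / d := by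
    intro i j
    rw [hQ]
    simp only [Matrix.of_apply, Complex.ofReal_div, Complex.ofReal_natCast]
    rw [← trre _ _ (hBherm i) (hherm j)]
  have hQC' : ∀ i j, (B i * lam j).trace = (d : ℂ) * ((Q i j : ℝ) : ℂ) := by
    intro i j
    rw [hQC i j, mul_div_cancel₀ _ hdne]
  -- expansion of arbitrary matrices in the basis
  set b := muBasis lam htrless horth hd with hb
  have hexp : ∀ M : Matrix (Fin d) (Fin d) ℂ,
      M = (∑ j, ((M * lam j).trace / d) • lam j) + (M.trace / d) • 1 := by
    intro M
    conv_lhs => rw [← b.sum_repr M]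
    rw [Fintype.sum_sum_type]
    congr 1
    · refine Finset.sum_congr rfl fun j _ => ?_
      rw [hb, muBasis_repr_inl lam htrless horth hd M j,
        muBasis_apply lam htrless horth hd (Sum.inl j)]
      rfl
    · simp only [Finset.univ_unique, Finset.sum_singleton]
      rw [hb, muBasis_repr_inr lam htrless horth hd M,
        muBasis_apply lam htrless horth hd (Sum.inr ())]
      rfl
  -- trace of a product against the expansion
  have hprod : ∀ M N : Matrix (Fin d) (Fin d) ℂ,
      (M * N).trace = ∑ j, ((M * lam j).trace / d) * (lam j * N).trace
        + (M.trace / d) * N.trace := by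
    intro M N
    conv_lhs => rw [hexp M]
    rw [Matrix.add_mul, Matrix.trace_add, Finset.sum_mul]
    congr 1
    · rw [Matrix.trace_sum]
      exact Finset.sum_congr rfl fun j _ => by
        rw [Matrix.smul_mul, Matrix.trace_smul, smul_eq_mul]
    · rw [Matrix.smul_mul, Matrix.trace_smul, Matrix.one_mul, smul_eq_mul]
  -- orthogonality
  have horthQ : ∀ i m, ∑ j, Q i j * Q m j = if i = m then (1 : ℝ) else 0 := by
    intro i m
    have h1 : (B m * B i).trace = ∑ j, ((B m * lam j).trace / d) * (lam j * B i).trace := by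
      rw [hprod (B m) (B i), hBtr m, zero_div, zero_mul, add_zero]
    have h2 : (∑ j, ((B m * lam j).trace / d) * (lam j * B i).trace)
        = (d : ℂ) * ∑ j, ((Q i j : ℝ) : ℂ) * ((Q m j : ℝ) : ℂ) := by
      rw [Finset.mul_sum]
      refine Finset.sum_congr rfl fun j _ => ?_
      rw [Matrix.trace_mul_comm (lam j) (B i), hQC' i j, hQC' m j]
      field_simp
    have h3 : (if m = i then (d : ℂ) else 0) = (d : ℂ) * ∑ j, ((Q i j : ℝ) : ℂ) * ((Q m j : ℝ) : ℂ) := by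
      rw [← hBmul m i, h1, h2]
    have h4 : ((if i = m then (1 : ℂ) else 0)) = ∑ j, ((Q i j : ℝ) : ℂ) * ((Q m j : ℝ) : ℂ) := by
      apply mul_left_cancel₀ hdne
      rw [← h3]
      by_cases h : i = m
      · subst h; simp
      · simp [h, Ne.symm h]
    have h5 : ((∑ j, Q i j * Q m j : ℝ) : ℂ) = (((if i = m then (1:ℝ) else 0) : ℝ) : ℂ) := by
      push_cast [apply_ite (Complex.ofReal)]
      exact h4.symm
    exact_mod_cast h5
  have hQso : IsSO (d ^ 2 - 1) Q := by
    have hQQt : Q * Qᵀ = 1 := by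
      ext i m
      rw [Matrix.mul_apply, Matrix.one_apply]
      simpa [Matrix.transpose_apply] using horthQ i m
    constructor
    · exact mul_eq_one_comm.mp hQQt
    · -- determinant via the linear map
      set f : Matrix (Fin d) (Fin d) ℂ →ₗ[ℂ] Matrix (Fin d) (Fin d) ℂ :=
        (LinearMap.mulRight ℂ U).comp (LinearMap.mulLeft ℂ Uᴴ) with hf
      have hfapp : ∀ M, f M = Uᴴ * M * U := fun M => by
        rw [hf]; simp [Matrix.mul_assoc]
      set CQ : Matrix (Fin (d ^ 2 - 1)) (Fin (d ^ 2 - 1)) ℂ :=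
        Matrix.of fun k j => ((Q j k : ℝ) : ℂ) with hCQ
      have hTM : LinearMap.toMatrix b b f =
          Matrix.fromBlocks CQ 0 0 (1 : Matrix Unit Unit ℂ) := by
        ext a c
        rw [LinearMap.toMatrix_apply, hb, muBasis_apply lam htrless horth hd c]
        cases c with
        | inl j =>
            have hfl : f (muFam lam (Sum.inl j)) = B j := by
              rw [hfapp]; rfl
            rw [hfl]
            cases a with
            | inl k =>
                rw [← hb, hb, muBasis_repr_inl lam htrless horth hd (B j) k]
                rw [hQC' j k, mul_div_cancel_left₀ _ hdne]
                simp [Matrix.fromBlocks, hCQ]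
            | inr u =>
                rw [← hb, hb, muBasis_repr_inr' lam htrless horth hd (B j) u]
                rw [hBtr j, zero_div]
                cases u
                simp [Matrix.fromBlocks]
        | inr u =>
            have hfr : f (muFam lam (Sum.inr u)) = 1 := by
              rw [hfapp]
              show Uᴴ * 1 * U = 1
              rw [Matrix.mul_one, hUu]
            rw [hfr]
            cases a with
            | inl k =>
                rw [← hb, hb, muBasis_repr_inl lam htrless horth hd 1 k]
                rw [Matrix.one_mul, htrless k, zero_div]
                cases u
                simp [Matrix.fromBlocks]
            | inr u' =>
                rw [← hb, hb, muBasis_repr_inr' lam htrless horth hd 1 u']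
                rw [Matrix.trace_one]
                cases u; cases u'
                simp [Matrix.fromBlocks, Matrix.one_apply, div_self hdne]
      have hdet1 : LinearMap.det f = 1 := det_conj_map U hUdet
      have hdet2 : LinearMap.det f = ((Q.det : ℝ) : ℂ) := by
        rw [← LinearMap.det_toMatrix b f, hTM, Matrix.det_fromBlocks_zero₂₁,
          Matrix.det_one, mul_one]
        have hCQeq : CQ = (Complex.ofRealHom.mapMatrix Q)ᵀ := by
          ext k j
          simp [hCQ, RingHom.mapMatrix_apply, Matrix.map_apply]
        rw [hCQeq, Matrix.det_transpose, ← RingHom.map_det]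
        rfl
      rw [hdet1] at hdet2
      exact Complex.ofReal_eq_one.mp hdet2.symm
  refine ⟨Q, hQso, ?_⟩
  intro ρ hρ i
  have hmain : (U * ρ * Uᴴ * lam i).trace = ∑ j, ((Q i j : ℝ) : ℂ) * (ρ * lam j).trace := by
    have h0 : (U * ρ * Uᴴ * lam i).trace = (ρ * B i).trace := by
      have e1 : ρ * B i = (ρ * Uᴴ * lam i) * U := by rw [hB]; simp only [Matrix.mul_assoc]
      rw [e1, Matrix.trace_mul_comm (ρ * Uᴴ * lam i) U]
      congr 1
      simp only [Matrix.mul_assoc]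
    rw [h0, hprod ρ (B i), hBtr i, mul_zero, add_zero]
    refine Finset.sum_congr rfl fun j _ => ?_
    rw [Matrix.trace_mul_comm (lam j) (B i), hQC' i j]
    field_simp
  rw [hmain, Complex.re_sum]
  exact Finset.sum_congr rfl fun j _ => Complex.re_ofReal_mul _ _
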